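/- Let p > q be primes with q not dividing p − 1, and let G be a group of order p^2·q whose Sylow p-subgroup is Z_p × Z_p and which has p^2 Sylow q-subgroups. Then G has no subgroup of order p·q. -/

import Mathlib

/-- Let `p > q` be primes with `q` not dividing `p - 1`, and let `G` be a group of order
`p ^ 2 * q` whose Sylow `p`-subgroup is `ℤ_p × ℤ_p` and which has `p ^ 2` Sylow
`q`-subgroups. Then `G` has no subgroup of order `p * q`. -/
theorem stmt_13 (p q : ℕ) (hp : p.Prime) (hq : q.Prime) (hpq : q < p)
    (hdvd : ¬ q ∣ p - 1) (G : Type) [Group G] [Finite G]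
    (hG : Nat.card G = p ^ 2 * q)
    (hSylp : ∀ P : Sylow p G,
      Nonempty ((P : Subgroup G) ≃* Multiplicative (ZMod p × ZMod p)))
    (hnq : Nat.card (Sylow q G) = p ^ 2) :
    ¬ ∃ H : Subgroup G, Nat.card H = p * q := by
  rintro ⟨H, hH⟩
  haveI : Fact p.Prime := ⟨hp⟩
  haveI : Fact q.Prime := ⟨hq⟩
  have hne : p ≠ q := hpq.ne'
  -- factorization facts
  have hfp : p.factorization q = 0 := by
    rw [hp.factorization, Finsupp.single_apply, if_neg hne]
  have hfH : (p * q).factorization q = 1 := by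
    rw [Nat.factorization_mul hp.pos.ne' hq.pos.ne', hq.factorization]
    simp [hfp]
  have hfG : (Nat.card G).factorization q = 1 := by
    rw [hG, Nat.factorization_mul (pow_ne_zero 2 hp.pos.ne') hq.pos.ne',
      Nat.factorization_pow, hq.factorization]
    simp [hfp]
  -- a Sylow q-subgroup of H
  obtain ⟨Q'⟩ : Nonempty (Sylow q H) := inferInstance
  have hQ'card : Nat.card (Q' : Subgroup H) = q := by
    rw [Q'.card_eq_multiplicity, hH, hfH, pow_one]
  -- index of Q' in H is p
  have hidx : (Q' : Subgroup H).index = p := by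
    have := Subgroup.card_mul_index (Q' : Subgroup H)
    rw [hQ'card, hH, mul_comm p q] at this
    exact Nat.eq_of_mul_eq_mul_left hq.pos this
  -- number of Sylow q-subgroups of H is 1
  have hcard1 : Nat.card (Sylow q H) = 1 := by
    have hdvdp : Nat.card (Sylow q H) ∣ p := hidx ▸ Sylow.card_dvd_index Q'
    rcases (Nat.Prime.eq_one_or_self_of_dvd hp _ hdvdp) with h1 | h1
    · exact h1
    · exfalso
      have hmod : Nat.card (Sylow q H) ≡ 1 [MOD q] := card_sylow_modEq_one q H
      rw [h1] at hmod
      exact hdvd ((Nat.modEq_iff_dvd' hp.one_lt.le).mp hmod.symm)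
  haveI : Subsingleton (Sylow q H) := (Nat.card_eq_one_iff_unique.mp hcard1).1
  -- Q' is normal in H
  have hQ'n : (Q' : Subgroup H).Normal := by
    rw [← Subgroup.normalizer_eq_top_iff, eq_top_iff]
    intro h _
    exact Sylow.smul_eq_iff_mem_normalizer.mp (Subsingleton.elim _ _)
  -- push Q' forward to G
  set Q : Subgroup G := (Q' : Subgroup H).map H.subtype with hQdef
  have hQcard : Nat.card Q = q := by
    rw [← hQ'card]
    exact (Nat.card_congr ((Q' : Subgroup H).equivMapOfInjective H.subtype
      H.subtype_injective).toEquiv).symm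
  -- Q as a Sylow q-subgroup of G
  have hQsyl : Nat.card Q = q ^ (Nat.card G).factorization q := by
    rw [hQcard, hfG, pow_one]
  set QG : Sylow q G := Sylow.ofCard Q hQsyl with hQGdef
  have hQGcoe : (QG : Subgroup G) = Q := rfl
  -- H normalizes Q
  have hHle : H ≤ (Subgroup.normalizer ((QG : Subgroup G) : Set G)) := by
    intro h hh
    rw [hQGcoe, Subgroup.mem_normalizer_iff]
    intro x
    constructor
    · rintro ⟨y, hy, rfl⟩
      exact ⟨⟨h, hh⟩ * y * ⟨h, hh⟩⁻¹, hQ'n.conj_mem y hy ⟨h, hh⟩, rfl⟩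
    · rintro ⟨y, hy, hxy⟩
      refine ⟨⟨h, hh⟩⁻¹ * y * ⟨h, hh⟩, ?_, ?_⟩
      · exact (by simpa using hQ'n.conj_mem y hy ⟨h, hh⟩⁻¹ : _ ∈ (Q' : Subgroup H))
      · have hy' : (y : G) = h * x * h⁻¹ := hxy
        show ((⟨h, hh⟩⁻¹ * y * ⟨h, hh⟩ : H) : G) = x
        push_cast [hy']
        group
  -- the normalizer has index p^2, hence cardinality q
  have hidxN : (Subgroup.normalizer ((QG : Subgroup G) : Set G)).index = p ^ 2 := by
    exact (Sylow.card_eq_index_normalizer QG).symm.trans hnq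
  have hcardN : Nat.card (Subgroup.normalizer ((QG : Subgroup G) : Set G)) = q := by
    have := Subgroup.card_mul_index (Subgroup.normalizer ((QG : Subgroup G) : Set G))
    rw [hidxN, hG] at this
    have h2 : Nat.card (Subgroup.normalizer ((QG : Subgroup G) : Set G)) * p ^ 2 = q * p ^ 2 := by
      rw [this]; ring
    exact Nat.eq_of_mul_eq_mul_right (pow_pos hp.pos 2) h2
  -- contradiction: p * q divides q
  have hdvdN : p * q ∣ q := by
    rw [← hH, ← hcardN]
    exact Subgroup.card_dvd_of_le hHle
  have : p * q ≤ q := Nat.le_of_dvd hq.pos hdvdN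
  nlinarith [hp.one_lt, hq.pos]
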